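/- Normalization of the logical fragment: If · ⊢^L a : A, then there exists a value v such that a ⇝* v. -/

import Mathlib

/-- Consistency classifiers: the logical (L) and programmatic (P) fragments. -/
inductive Frag : Type
  | L | P
deriving DecidableEq, Repr

/-- Types, with de Bruijn type variables for recursive types. -/
inductive Ty : Type
  | unit : Ty
  | arrow : Ty → Frag → Ty → Ty       -- A →^θ B
  | sum : Ty → Ty → Ty                -- A + B
  | at_ : Ty → Frag → Ty              -- A @ θ
  | tvar : ℕ → Ty                     -- α
  | mu : Ty → Ty                      -- μα. A  (binds one type variable)
deriving DecidableEq, Repr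

namespace Ty

def size : Ty → ℕ
  | unit => 1
  | arrow A _ B => A.size + B.size + 1
  | sum A B => A.size + B.size + 1
  | at_ A _ => A.size + 1
  | tvar _ => 1
  | mu A => A.size + 1

def rename (ρ : ℕ → ℕ) : Ty → Ty
  | unit => unit
  | arrow A θ B => arrow (A.rename ρ) θ (B.rename ρ)
  | sum A B => sum (A.rename ρ) (B.rename ρ)
  | at_ A θ => at_ (A.rename ρ) θ
  | tvar n => tvar (ρ n)
  | mu A => mu (A.rename (fun n => match n with | 0 => 0 | n+1 => ρ n + 1))

def subst (σ : ℕ → Ty) : Ty → Ty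
  | unit => unit
  | arrow A θ B => arrow (A.subst σ) θ (B.subst σ)
  | sum A B => sum (A.subst σ) (B.subst σ)
  | at_ A θ => at_ (A.subst σ) θ
  | tvar n => σ n
  | mu A => mu (A.subst (fun n => match n with | 0 => tvar 0 | n+1 => (σ n).rename Nat.succ))

end Ty

/-- [B/α]A : substitute B for the outermost type variable of A. -/
def tsubst0 (B A : Ty) : Ty := A.subst (fun n => match n with | 0 => B | n+1 => .tvar n)

/-- Terms, with de Bruijn term variables.  `lam` binds one variable (x);
    `rec` binds two: index 0 is x, index 1 is f.  `unbox` and the branches of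
    `case` bind one variable. -/
inductive Tm : Type
  | var : ℕ → Tm
  | lam : Tm → Tm                     -- λx. a
  | recc : Tm → Tm                     -- rec f x. a
  | app : Tm → Tm → Tm
  | box : Tm → Tm
  | unbox : Tm → Tm → Tm              -- unbox x = a in b
  | unit : Tm
  | inl : Tm → Tm
  | inr : Tm → Tm
  | case : Tm → Tm → Tm → Tm          -- case a of {inl x ⇒ b1 ; inr x ⇒ b2}
  | roll : Tm → Tm
  | unroll : Tm → Tm
deriving DecidableEq, Repr

namespace Tm

def liftR (ρ : ℕ → ℕ) : ℕ → ℕ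
  | 0 => 0
  | n+1 => ρ n + 1

def rename (ρ : ℕ → ℕ) : Tm → Tm
  | var n => var (ρ n)
  | lam a => lam (a.rename (liftR ρ))
  | recc a => recc (a.rename (liftR (liftR ρ)))
  | app a b => app (a.rename ρ) (b.rename ρ)
  | box a => box (a.rename ρ)
  | unbox a b => unbox (a.rename ρ) (b.rename (liftR ρ))
  | unit => unit
  | inl a => inl (a.rename ρ)
  | inr a => inr (a.rename ρ)
  | case a b c => case (a.rename ρ) (b.rename (liftR ρ)) (c.rename (liftR ρ))
  | roll a => roll (a.rename ρ)
  | unroll a => unroll (a.rename ρ)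

def liftS (σ : ℕ → Tm) : ℕ → Tm
  | 0 => var 0
  | n+1 => (σ n).rename Nat.succ

def subst (σ : ℕ → Tm) : Tm → Tm
  | var n => σ n
  | lam a => lam (a.subst (liftS σ))
  | recc a => recc (a.subst (liftS (liftS σ)))
  | app a b => app (a.subst σ) (b.subst σ)
  | box a => box (a.subst σ)
  | unbox a b => unbox (a.subst σ) (b.subst (liftS σ))
  | unit => unit
  | inl a => inl (a.subst σ)
  | inr a => inr (a.subst σ)
  | case a b c => case (a.subst σ) (b.subst (liftS σ)) (c.subst (liftS σ))
  | roll a => roll (a.subst σ)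
  | unroll a => unroll (a.subst σ)

end Tm

/-- [v/x]a : substitute v for the outermost term variable of a. -/
def subst1 (a v : Tm) : Tm := a.subst (fun n => match n with | 0 => v | n+1 => .var n)

/-- [v/x][w/f]a : substitute v for index 0 (x) and w for index 1 (f) in a. -/
def subst2 (a v w : Tm) : Tm :=
  a.subst (fun n => match n with | 0 => v | 1 => w | n+2 => .var n)

/-- Values. -/
inductive IsValue : Tm → Prop
  | var (n : ℕ) : IsValue (.var n)
  | unit : IsValue .unit
  | inl {v} : IsValue v → IsValue (.inl v)
  | inr {v} : IsValue v → IsValue (.inr v)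
  | lam (a : Tm) : IsValue (.lam a)
  | recc (a : Tm) : IsValue (.recc a)
  | box {v} : IsValue v → IsValue (.box v)
  | roll {v} : IsValue v → IsValue (.roll v)

/-- First-order types. -/
inductive FO : Ty → Prop
  | unit : FO .unit
  | sum {A B} : FO A → FO B → FO (.sum A B)
  | at_ (A : Ty) (θ : Frag) : FO (.at_ A θ)

/-- Typing contexts: each variable is tagged with a fragment. -/
abbrev Ctx := List (Frag × Ty)

/-- The typing judgement Γ ⊢^θ a : A. -/
inductive Typing : Ctx → Frag → Tm → Ty → Prop
  | tvar {Γ θ A n} : Γ[n]? = some (θ, A) → Typing Γ θ (.var n) A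
  | tlam {Γ θ' A B a} :
      Typing ((θ', A) :: Γ) .L a B →
      Typing Γ .L (.lam a) (.arrow A θ' B)
  | trec {Γ θ' A B a} :
      Typing ((θ', A) :: (.P, .arrow A θ' B) :: Γ) .P a B →
      Typing Γ .P (.recc a) (.arrow A θ' B)
  | tboxP {Γ θ a A} :
      Typing Γ θ a A → Typing Γ .P (.box a) (.at_ A θ)
  | tboxL {Γ θ a A} :
      Typing Γ .L a A → Typing Γ .L (.box a) (.at_ A θ)
  | tboxLV {Γ v A} :
      IsValue v → Typing Γ .P v A → Typing Γ .L (.box v) (.at_ A .P)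
  | tunbox {Γ θ θ' a b A B} :
      Typing Γ θ a (.at_ A θ') →
      Typing ((θ', A) :: Γ) θ b B →
      Typing Γ θ (.unbox a b) B
  | tapp {Γ θ θ' a b A B} :
      Typing Γ θ a (.arrow A θ' B) →
      Typing Γ θ (.box b) (.at_ A θ') →
      Typing Γ θ (.app a b) B
  | tunit {Γ θ} : Typing Γ θ .unit .unit
  | tsub {Γ a A} : Typing Γ .L a A → Typing Γ .P a A
  | tfoval {Γ v A} :
      IsValue v → FO A → Typing Γ .P v A → Typing Γ .L v A
  | tinl {Γ θ a A B} : Typing Γ θ a A → Typing Γ θ (.inl a) (.sum A B)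
  | tinr {Γ θ a A B} : Typing Γ θ a B → Typing Γ θ (.inr a) (.sum A B)
  | tcase {Γ θ θ' a b1 b2 A B C} :
      Typing Γ θ (.box a) (.at_ (.sum A B) θ') →
      Typing ((θ', A) :: Γ) θ b1 C →
      Typing ((θ', B) :: Γ) θ b2 C →
      Typing Γ θ (.case a b1 b2) C
  | troll {Γ a A} :
      Typing Γ .P a (tsubst0 (.mu A) A) →
      Typing Γ .P (.roll a) (.mu A)
  | tunroll {Γ a A} :
      Typing Γ .P a (.mu A) →
      Typing Γ .P (.unroll a) (tsubst0 (.mu A) A)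

/-- Call-by-value small-step reduction a ⇝ b. -/
inductive Step : Tm → Tm → Prop
  | beta {a v} : IsValue v → Step (.app (.lam a) v) (subst1 a v)
  | betaRec {a v} : IsValue v → Step (.app (.recc a) v) (subst2 a v (.recc a))
  | unbox {v b} : IsValue v → Step (.unbox (.box v) b) (subst1 b v)
  | caseL {v b1 b2} : IsValue v → Step (.case (.inl v) b1 b2) (subst1 b1 v)
  | caseR {v b1 b2} : IsValue v → Step (.case (.inr v) b1 b2) (subst1 b2 v)
  | unroll {v} : IsValue v → Step (.unroll (.roll v)) v
  | app1 {a a' b} : Step a a' → Step (.app a b) (.app a' b)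
  | app2 {v b b'} : IsValue v → Step b b' → Step (.app v b) (.app v b')
  | inl {a a'} : Step a a' → Step (.inl a) (.inl a')
  | inr {a a'} : Step a a' → Step (.inr a) (.inr a')
  | caseCtx {a a' b1 b2} : Step a a' → Step (.case a b1 b2) (.case a' b1 b2)
  | box {a a'} : Step a a' → Step (.box a) (.box a')
  | unbox1 {a a' b} : Step a a' → Step (.unbox a b) (.unbox a' b)
  | roll {a a'} : Step a a' → Step (.roll a) (.roll a')
  | unrollCtx {a a'} : Step a a' → Step (.unroll a) (.unroll a')

/-- Indexed multi-step reduction a ⇝^n b. -/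
inductive StepN : ℕ → Tm → Tm → Prop
  | refl (a : Tm) : StepN 0 a a
  | step {n a b c} : Step a b → StepN n b c → StepN (n+1) a c

/-- Multi-step reduction a ⇝* b. -/
inductive StepStar : Tm → Tm → Prop
  | refl (a : Tm) : StepStar a a
  | step {a b c} : Step a b → StepStar b c → StepStar a c

/-- The step-indexed value interpretation V[[A]]^θ_k.
    (The computational interpretation C[[·]] is inlined in the function-type
    and recursive-type cases; see `Cint` below.) -/
def Vint (k : ℕ) (θ : Frag) (A : Ty) : Set Tm :=
  match A, θ with
  | .unit, _ => {Tm.unit}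
  | .sum A B, θ =>
      {t | (∃ v, t = Tm.inl v ∧ v ∈ Vint k θ A) ∨ (∃ v, t = Tm.inr v ∧ v ∈ Vint k θ B)}
  | .at_ A θ', _ => {t | ∃ v, t = Tm.box v ∧ v ∈ Vint k θ' A}
  | .arrow A θ' B, .L =>
      {t | ∃ a, t = Tm.lam a ∧ Typing [] .L (Tm.lam a) (.arrow A θ' B) ∧
        ∀ j, j ≤ k → ∀ v, v ∈ Vint j θ' A →
          Typing [] .L (subst1 a v) B ∧
          ∃ w, StepStar (subst1 a v) w ∧ IsValue w ∧ w ∈ Vint j .L B}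
  | .arrow A θ' B, .P =>
      {t | ∃ a, t = Tm.recc a ∧ Typing [] .P (Tm.recc a) (.arrow A θ' B) ∧
        ∀ j, j < k → ∀ v, v ∈ Vint j θ' A →
          Typing [] .P (subst2 a v (Tm.recc a)) B ∧
          ∀ i, i ≤ j → ∀ w, StepN i (subst2 a v (Tm.recc a)) w → IsValue w →
            w ∈ Vint (j - i) .P B}
  | .mu _, .L => ∅
  | .mu A, .P =>
      {t | ∃ v, t = Tm.roll v ∧ Typing [] .P (Tm.roll v) (.mu A) ∧
        ∀ j, j < k → v ∈ Vint j .P (tsubst0 (.mu A) A)}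
  | .tvar _, _ => ∅
termination_by (k, A.size)
decreasing_by
  all_goals simp only [Prod.lex_def, Ty.size, true_and, eq_self_iff_true]
  all_goals omega

/-- The step-indexed computational interpretation C[[A]]^θ_k. -/
def Cint (k : ℕ) (θ : Frag) (A : Ty) : Set Tm :=
  match θ with
  | .P => {a | Typing [] .P a A ∧
      ∀ j, j ≤ k → ∀ v, StepN j a v → IsValue v → v ∈ Vint (k - j) .P A}
  | .L => {a | Typing [] .L a A ∧
      ∃ v, StepStar a v ∧ IsValue v ∧ v ∈ Vint k .L A}

/-! ### Auxiliary development for normalization -/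

namespace Tm

theorem rename_rename (ρ ρ' : ℕ → ℕ) (a : Tm) :
    (a.rename ρ).rename ρ' = a.rename (fun n => ρ' (ρ n)) := by
  induction a generalizing ρ ρ' with
  | var n => rfl
  | lam a ih =>
      simp only [rename, ih]
      congr 1; apply congrArg (a.rename ·) ?_; funext n; cases n <;> rfl
  | recc a ih =>
      simp only [rename, ih]
      congr 1; apply congrArg (a.rename ·) ?_; funext n
      cases n with
      | zero => rfl
      | succ n => cases n <;> rfl
  | app a b iha ihb => simp only [rename, iha, ihb]
  | box a ih => simp only [rename, ih]
  | unbox a b iha ihb =>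
      simp only [rename, iha, ihb]
      congr 1; apply congrArg (b.rename ·) ?_; funext n; cases n <;> rfl
  | unit => rfl
  | inl a ih => simp only [rename, ih]
  | inr a ih => simp only [rename, ih]
  | case a b c iha ihb ihc =>
      simp only [rename, iha, ihb, ihc]
      congr 1
      · apply congrArg (b.rename ·) ?_; funext n; cases n <;> rfl
      · apply congrArg (c.rename ·) ?_; funext n; cases n <;> rfl
  | roll a ih => simp only [rename, ih]
  | unroll a ih => simp only [rename, ih]

theorem rename_subst (ρ : ℕ → ℕ) (σ : ℕ → Tm) (a : Tm) :
    (a.rename ρ).subst σ = a.subst (fun n => σ (ρ n)) := by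
  induction a generalizing ρ σ with
  | var n => rfl
  | lam a ih =>
      simp only [rename, subst, ih]
      congr 1; apply congrArg (a.subst ·) ?_; funext n; cases n <;> rfl
  | recc a ih =>
      simp only [rename, subst, ih]
      congr 1; apply congrArg (a.subst ·) ?_; funext n
      cases n with
      | zero => rfl
      | succ n => cases n <;> rfl
  | app a b iha ihb => simp only [rename, subst, iha, ihb]
  | box a ih => simp only [rename, subst, ih]
  | unbox a b iha ihb =>
      simp only [rename, subst, iha, ihb]
      congr 1; apply congrArg (b.subst ·) ?_; funext n; cases n <;> rfl
  | unit => rfl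
  | inl a ih => simp only [rename, subst, ih]
  | inr a ih => simp only [rename, subst, ih]
  | case a b c iha ihb ihc =>
      simp only [rename, subst, iha, ihb, ihc]
      congr 1
      · apply congrArg (b.subst ·) ?_; funext n; cases n <;> rfl
      · apply congrArg (c.subst ·) ?_; funext n; cases n <;> rfl
  | roll a ih => simp only [rename, subst, ih]
  | unroll a ih => simp only [rename, subst, ih]

theorem subst_rename (σ : ℕ → Tm) (ρ : ℕ → ℕ) (a : Tm) :
    (a.subst σ).rename ρ = a.subst (fun n => (σ n).rename ρ) := by
  induction a generalizing ρ σ with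
  | var n => rfl
  | lam a ih =>
      simp only [subst, rename, ih]
      congr 1; apply congrArg (a.subst ·) ?_; funext n
      cases n with
      | zero => rfl
      | succ n =>
          simp only [liftS, rename_rename]
          rfl
  | recc a ih =>
      simp only [subst, rename, ih]
      congr 1; apply congrArg (a.subst ·) ?_; funext n
      cases n with
      | zero => rfl
      | succ n =>
          cases n with
          | zero => simp only [liftS, rename_rename]; rfl
          | succ n => simp only [liftS, rename_rename]; rfl
  | app a b iha ihb => simp only [subst, rename, iha, ihb]
  | box a ih => simp only [subst, rename, ih]
  | unbox a b iha ihb =>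
      simp only [subst, rename, iha, ihb]
      congr 1; apply congrArg (b.subst ·) ?_; funext n
      cases n with
      | zero => rfl
      | succ n => simp only [liftS, rename_rename]; rfl
  | unit => rfl
  | inl a ih => simp only [subst, rename, ih]
  | inr a ih => simp only [subst, rename, ih]
  | case a b c iha ihb ihc =>
      simp only [subst, rename, iha, ihb, ihc]
      congr 1
      · apply congrArg (b.subst ·) ?_; funext n
        cases n with
        | zero => rfl
        | succ n => simp only [liftS, rename_rename]; rfl
      · apply congrArg (c.subst ·) ?_; funext n
        cases n with
        | zero => rfl
        | succ n => simp only [liftS, rename_rename]; rfl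
  | roll a ih => simp only [subst, rename, ih]
  | unroll a ih => simp only [subst, rename, ih]

theorem subst_subst (σ τ : ℕ → Tm) (a : Tm) :
    (a.subst σ).subst τ = a.subst (fun n => (σ n).subst τ) := by
  have key : ∀ (σ τ : ℕ → Tm) (n : ℕ),
      (liftS σ n).subst (liftS τ) = liftS (fun n => (σ n).subst τ) n := by
    intro σ τ n
    cases n with
    | zero => rfl
    | succ n =>
        simp only [liftS, rename_subst, subst_rename]
  induction a generalizing σ τ with
  | var n => rfl
  | lam a ih =>
      simp only [subst, ih]
      congr 1; apply congrArg (a.subst ·) ?_; funext n; exact key σ τ n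
  | recc a ih =>
      simp only [subst, ih]
      congr 1; apply congrArg (a.subst ·) ?_; funext n
      calc (liftS (liftS σ) n).subst (liftS (liftS τ))
          = liftS (fun m => (liftS σ m).subst (liftS τ)) n := key _ _ n
        _ = _ := congrArg (fun f => liftS f n) (funext fun m => key σ τ m)
  | app a b iha ihb => simp only [subst, iha, ihb]
  | box a ih => simp only [subst, ih]
  | unbox a b iha ihb =>
      simp only [subst, iha, ihb]
      congr 1; apply congrArg (b.subst ·) ?_; funext n; exact key σ τ n
  | unit => rfl
  | inl a ih => simp only [subst, ih]
  | inr a ih => simp only [subst, ih]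
  | case a b c iha ihb ihc =>
      simp only [subst, iha, ihb, ihc]
      congr 1
      · apply congrArg (b.subst ·) ?_; funext n; exact key σ τ n
      · apply congrArg (c.subst ·) ?_; funext n; exact key σ τ n
  | roll a ih => simp only [subst, ih]
  | unroll a ih => simp only [subst, ih]

theorem subst_var (a : Tm) : a.subst Tm.var = a := by
  induction a with
  | var n => rfl
  | lam a ih =>
      have : liftS Tm.var = Tm.var := by funext n; cases n <;> rfl
      simp only [subst, this, ih]
  | recc a ih =>
      have : liftS Tm.var = Tm.var := by funext n; cases n <;> rfl
      simp only [subst, this, ih]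
  | app a b iha ihb => simp only [subst, iha, ihb]
  | box a ih => simp only [subst, ih]
  | unbox a b iha ihb =>
      have : liftS Tm.var = Tm.var := by funext n; cases n <;> rfl
      simp only [subst, this, iha, ihb]
  | unit => rfl
  | inl a ih => simp only [subst, ih]
  | inr a ih => simp only [subst, ih]
  | case a b c iha ihb ihc =>
      have : liftS Tm.var = Tm.var := by funext n; cases n <;> rfl
      simp only [subst, this, iha, ihb, ihc]
  | roll a ih => simp only [subst, ih]
  | unroll a ih => simp only [subst, ih]

end Tm

/-- Cons a term onto a substitution. -/
def scons (w : Tm) (σ : ℕ → Tm) : ℕ → Tm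
  | 0 => w
  | n+1 => σ n

theorem subst1_subst (a : Tm) (σ : ℕ → Tm) (w : Tm) :
    subst1 (a.subst (Tm.liftS σ)) w = a.subst (scons w σ) := by
  unfold subst1
  rw [Tm.subst_subst]
  apply congrArg (a.subst ·) ?_
  funext n
  cases n with
  | zero => rfl
  | succ n =>
      simp only [Tm.liftS, Tm.rename_subst]
      exact Tm.subst_var (σ n)


/-! ### Value lemmas -/

theorem IsValue.rename {v : Tm} (h : IsValue v) (ρ : ℕ → ℕ) : IsValue (v.rename ρ) := by
  induction h generalizing ρ with
  | var n => exact IsValue.var _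
  | unit => exact IsValue.unit
  | inl _ ih => exact IsValue.inl (ih ρ)
  | inr _ ih => exact IsValue.inr (ih ρ)
  | lam a => exact IsValue.lam _
  | recc a => exact IsValue.recc _
  | box _ ih => exact IsValue.box (ih ρ)
  | roll _ ih => exact IsValue.roll (ih ρ)

theorem IsValue.subst {v : Tm} (h : IsValue v) (σ : ℕ → Tm) (hσ : ∀ n, IsValue (σ n)) :
    IsValue (v.subst σ) := by
  induction h generalizing σ with
  | var n => exact hσ n
  | unit => exact IsValue.unit
  | inl _ ih => exact IsValue.inl (ih σ hσ)
  | inr _ ih => exact IsValue.inr (ih σ hσ)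
  | lam a => exact IsValue.lam _
  | recc a => exact IsValue.recc _
  | box _ ih => exact IsValue.box (ih σ hσ)
  | roll _ ih => exact IsValue.roll (ih σ hσ)

theorem IsValue.no_step {v b : Tm} (h : IsValue v) (hs : Step v b) : False := by
  induction h generalizing b with
  | var n => cases hs
  | unit => cases hs
  | inl hv ih => cases hs with | inl h' => exact ih h'
  | inr hv ih => cases hs with | inr h' => exact ih h'
  | lam a => cases hs
  | recc a => cases hs
  | box hv ih => cases hs with | box h' => exact ih h'
  | roll hv ih => cases hs with | roll h' => exact ih h'

theorem IsValue.stepStar_eq {v u : Tm} (h : IsValue v) (hs : StepStar v u) : u = v := by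
  cases hs with
  | refl => rfl
  | step h1 _ => exact absurd h1 h.no_step

/-! ### StepStar lemmas -/

theorem StepStar.trans {a b c : Tm} (h1 : StepStar a b) (h2 : StepStar b c) : StepStar a c := by
  induction h1 with
  | refl => exact h2
  | step hs _ ih => exact StepStar.step hs (ih h2)

theorem StepStar.boxCong {a b : Tm} (h : StepStar a b) : StepStar (.box a) (.box b) := by
  induction h with
  | refl => exact StepStar.refl _
  | step hs _ ih => exact StepStar.step (Step.box hs) ih

theorem StepStar.inlCong {a b : Tm} (h : StepStar a b) : StepStar (.inl a) (.inl b) := by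
  induction h with
  | refl => exact StepStar.refl _
  | step hs _ ih => exact StepStar.step (Step.inl hs) ih

theorem StepStar.inrCong {a b : Tm} (h : StepStar a b) : StepStar (.inr a) (.inr b) := by
  induction h with
  | refl => exact StepStar.refl _
  | step hs _ ih => exact StepStar.step (Step.inr hs) ih

theorem StepStar.app1Cong {a a' b : Tm} (h : StepStar a a') : StepStar (.app a b) (.app a' b) := by
  induction h with
  | refl => exact StepStar.refl _
  | step hs _ ih => exact StepStar.step (Step.app1 hs) ih

theorem StepStar.app2Cong {v b b' : Tm} (hv : IsValue v) (h : StepStar b b') :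
    StepStar (.app v b) (.app v b') := by
  induction h with
  | refl => exact StepStar.refl _
  | step hs _ ih => exact StepStar.step (Step.app2 hv hs) ih

theorem StepStar.unbox1Cong {a a' b : Tm} (h : StepStar a a') :
    StepStar (.unbox a b) (.unbox a' b) := by
  induction h with
  | refl => exact StepStar.refl _
  | step hs _ ih => exact StepStar.step (Step.unbox1 hs) ih

theorem StepStar.caseCong {a a' b1 b2 : Tm} (h : StepStar a a') :
    StepStar (.case a b1 b2) (.case a' b1 b2) := by
  induction h with
  | refl => exact StepStar.refl _
  | step hs _ ih => exact StepStar.step (Step.caseCtx hs) ih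

/-- Inversion: a reduction sequence out of `box a` stays a box. -/
theorem stepStar_box_inv {a t : Tm} (h : StepStar (.box a) t) (hv : IsValue t) :
    ∃ w, t = .box w ∧ StepStar a w ∧ IsValue w := by
  generalize hb : Tm.box a = b at h
  induction h generalizing a with
  | refl c =>
      subst hb
      cases hv with | box hw => exact ⟨_, rfl, StepStar.refl _, hw⟩
  | step hs _ ih =>
      subst hb
      cases hs with
      | box h' =>
          obtain ⟨w, rfl, hsw, hw⟩ := ih hv rfl
          exact ⟨w, rfl, StepStar.step h' hsw, hw⟩

/-! ### The (non-indexed) semantic interpretation used for normalization -/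

def Vsem : Ty → Frag → Tm → Prop
  | .unit, _, v => v = .unit
  | .sum A B, θ, v =>
      (∃ w, v = .inl w ∧ Vsem A θ w) ∨ (∃ w, v = .inr w ∧ Vsem B θ w)
  | .at_ A θ', _, v => ∃ w, v = .box w ∧ Vsem A θ' w
  | .arrow A θ' B, .L, v =>
      ∃ a, v = .lam a ∧ ∀ w, IsValue w → Vsem A θ' w →
        ∃ u, StepStar (subst1 a w) u ∧ IsValue u ∧ Vsem B .L u
  | .arrow _ _ _, .P, _ => True
  | .tvar _, .L, _ => False
  | .tvar _, .P, _ => True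
  | .mu _, .L, _ => False
  | .mu _, .P, _ => True

/-- Weakening L-semantics to P-semantics. -/
theorem Vsem.toP : ∀ (A : Ty) (v : Tm), Vsem A .L v → Vsem A .P v
  | .unit, v, h => h
  | .sum A B, v, h => by
      rcases h with ⟨w, rfl, hw⟩ | ⟨w, rfl, hw⟩
      · exact Or.inl ⟨w, rfl, Vsem.toP A w hw⟩
      · exact Or.inr ⟨w, rfl, Vsem.toP B w hw⟩
  | .at_ A θ', v, h => h
  | .arrow _ _ _, _, _ => trivial
  | .tvar _, _, h => h.elim
  | .mu _, _, h => h.elim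

/-- For first-order types, P-semantics implies L-semantics. -/
theorem Vsem.toL {A : Ty} (hA : FO A) : ∀ v : Tm, Vsem A .P v → Vsem A .L v := by
  induction hA with
  | unit => exact fun v h => h
  | sum hA hB ihA ihB =>
      intro v h
      rcases h with ⟨w, rfl, hw⟩ | ⟨w, rfl, hw⟩
      · exact Or.inl ⟨w, rfl, ihA w hw⟩
      · exact Or.inr ⟨w, rfl, ihB w hw⟩
  | at_ A θ => exact fun v h => h

/-- A good substitution for a context. -/
def Good (Γ : Ctx) (σ : ℕ → Tm) : Prop :=
  (∀ n, IsValue (σ n)) ∧ ∀ n θ A, Γ[n]? = some (θ, A) → Vsem A θ (σ n)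

theorem Good.cons {Γ : Ctx} {σ : ℕ → Tm} {θ : Frag} {A : Ty} {w : Tm}
    (hσ : Good Γ σ) (hw : IsValue w) (hws : Vsem A θ w) :
    Good ((θ, A) :: Γ) (scons w σ) := by
  refine ⟨fun n => ?_, fun n θ' A' h => ?_⟩
  · cases n with
    | zero => exact hw
    | succ n => exact hσ.1 n
  · cases n with
    | zero =>
        rw [List.getElem?_cons_zero] at h
        cases h
        exact hws
    | succ n => exact hσ.2 n θ' A' h

/-- The semantic conclusion of the fundamental lemma. -/
def Sem : Frag → Ty → Tm → Prop
  | .L, A, t => ∃ u, StepStar t u ∧ IsValue u ∧ Vsem A .L u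
  | .P, A, t => IsValue t → Vsem A .P t


/-- The fundamental lemma. -/
theorem fund {Γ : Ctx} {θ : Frag} {a : Tm} {A : Ty} (h : Typing Γ θ a A) :
    ∀ σ : ℕ → Tm, Good Γ σ → Sem θ A (a.subst σ) := by
  induction h with
  | @tvar Γ θ A n hn =>
      intro σ hσ
      cases θ with
      | L => exact ⟨σ n, StepStar.refl _, hσ.1 n, hσ.2 n _ _ hn⟩
      | P => exact fun _ => hσ.2 n _ _ hn
  | @tlam Γ θ' A B a h ih =>
      intro σ hσ
      refine ⟨Tm.lam (a.subst (Tm.liftS σ)), StepStar.refl _, IsValue.lam _, ?_⟩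
      refine ⟨_, rfl, ?_⟩
      intro w hw hws
      rw [subst1_subst]
      exact ih (scons w σ) (hσ.cons hw hws)
  | trec h ih =>
      intro σ hσ
      exact fun _ => trivial
  | @tboxP Γ θ a A h ih =>
      intro σ hσ hv
      have hv' : IsValue (a.subst σ) := by
        simp only [Tm.subst] at hv
        cases hv with | box h => exact h
      cases θ with
      | P => exact ⟨_, rfl, ih σ hσ hv'⟩
      | L =>
          obtain ⟨u, hsu, hu, hvu⟩ := ih σ hσ
          cases hv'.stepStar_eq hsu
          exact ⟨_, rfl, hvu⟩
  | @tboxL Γ θ a A h ih =>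
      intro σ hσ
      obtain ⟨u, hsu, hu, hvu⟩ := ih σ hσ
      refine ⟨Tm.box u, hsu.boxCong, IsValue.box hu, ?_⟩
      cases θ with
      | L => exact ⟨u, rfl, hvu⟩
      | P => exact ⟨u, rfl, Vsem.toP _ u hvu⟩
  | @tboxLV Γ v A hv h ih =>
      intro σ hσ
      have hvσ := hv.subst σ hσ.1
      exact ⟨Tm.box (v.subst σ), StepStar.refl _, IsValue.box hvσ, _, rfl, ih σ hσ hvσ⟩
  | @tunbox Γ θ θ' a b A B h1 h2 ih1 ih2 =>
      intro σ hσ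
      cases θ with
      | P => intro hval; simp only [Tm.subst] at hval; cases hval
      | L =>
          obtain ⟨u, hsu, hu, hvu⟩ := ih1 σ hσ
          obtain ⟨w, rfl, hvw⟩ := hvu
          have hw : IsValue w := by cases hu with | box h => exact h
          obtain ⟨u', hsu', hu', hvu'⟩ := ih2 (scons w σ) (hσ.cons hw hvw)
          refine ⟨u', ?_, hu', hvu'⟩
          exact (hsu.unbox1Cong).trans
            (StepStar.step (Step.unbox hw) (by rw [subst1_subst]; exact hsu'))
  | @tapp Γ θ θ' a b A B h1 h2 ih1 ih2 =>
      intro σ hσ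
      cases θ with
      | P => intro hval; simp only [Tm.subst] at hval; cases hval
      | L =>
          obtain ⟨u, hsu, hu, hvu⟩ := ih1 σ hσ
          obtain ⟨t, rfl, harr⟩ := hvu
          obtain ⟨u2, hsu2, hu2, hvu2⟩ := ih2 σ hσ
          obtain ⟨w, rfl, hsw, hw⟩ := stepStar_box_inv hsu2 hu2
          obtain ⟨w', heq, hvw⟩ := hvu2
          injection heq with heq
          subst heq
          obtain ⟨u3, hsu3, hu3, hvu3⟩ := harr w hw hvw
          refine ⟨u3, ?_, hu3, hvu3⟩
          exact (hsu.app1Cong).trans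
            ((StepStar.app2Cong (IsValue.lam t) hsw).trans
              (StepStar.step (Step.beta hw) hsu3))
  | @tunit Γ θ =>
      intro σ hσ
      cases θ with
      | L => exact ⟨Tm.unit, StepStar.refl _, IsValue.unit, rfl⟩
      | P => exact fun _ => rfl
  | tsub h ih =>
      intro σ hσ hval
      obtain ⟨u, hsu, hu, hvu⟩ := ih σ hσ
      cases hval.stepStar_eq hsu
      exact Vsem.toP _ _ hvu
  | tfoval hv hFO h ih =>
      intro σ hσ
      have hvσ := hv.subst σ hσ.1
      exact ⟨_, StepStar.refl _, hvσ, Vsem.toL hFO _ (ih σ hσ hvσ)⟩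
  | @tinl Γ θ a A B h ih =>
      intro σ hσ
      cases θ with
      | L =>
          obtain ⟨u, hsu, hu, hvu⟩ := ih σ hσ
          exact ⟨Tm.inl u, hsu.inlCong, IsValue.inl hu, Or.inl ⟨u, rfl, hvu⟩⟩
      | P =>
          intro hval
          have hv' : IsValue (a.subst σ) := by
            simp only [Tm.subst] at hval
            cases hval with | inl h => exact h
          exact Or.inl ⟨_, rfl, ih σ hσ hv'⟩
  | @tinr Γ θ a A B h ih =>
      intro σ hσ
      cases θ with
      | L =>
          obtain ⟨u, hsu, hu, hvu⟩ := ih σ hσ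
          exact ⟨Tm.inr u, hsu.inrCong, IsValue.inr hu, Or.inr ⟨u, rfl, hvu⟩⟩
      | P =>
          intro hval
          have hv' : IsValue (a.subst σ) := by
            simp only [Tm.subst] at hval
            cases hval with | inr h => exact h
          exact Or.inr ⟨_, rfl, ih σ hσ hv'⟩
  | @tcase Γ θ θ' a b1 b2 A B C h1 h2 h3 ih1 ih2 ih3 =>
      intro σ hσ
      cases θ with
      | P => intro hval; simp only [Tm.subst] at hval; cases hval
      | L =>
          obtain ⟨u, hsu, hu, hvu⟩ := ih1 σ hσ
          obtain ⟨w, rfl, hsw, hw⟩ := stepStar_box_inv hsu hu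
          obtain ⟨w', heq, hvw⟩ := hvu
          injection heq with heq
          subst heq
          rcases hvw with ⟨w1, rfl, hv1⟩ | ⟨w1, rfl, hv1⟩
          · have hw1 : IsValue w1 := by cases hw with | inl h => exact h
            obtain ⟨u', hsu', hu', hvu'⟩ := ih2 (scons w1 σ) (hσ.cons hw1 hv1)
            refine ⟨u', ?_, hu', hvu'⟩
            exact (hsw.caseCong).trans
              (StepStar.step (Step.caseL hw1) (by rw [subst1_subst]; exact hsu'))
          · have hw1 : IsValue w1 := by cases hw with | inr h => exact h
            obtain ⟨u', hsu', hu', hvu'⟩ := ih3 (scons w1 σ) (hσ.cons hw1 hv1)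
            refine ⟨u', ?_, hu', hvu'⟩
            exact (hsw.caseCong).trans
              (StepStar.step (Step.caseR hw1) (by rw [subst1_subst]; exact hsu'))
  | troll h ih =>
      intro σ hσ
      exact fun _ => trivial
  | tunroll h ih =>
      intro σ hσ
      intro hval
      simp only [Tm.subst] at hval
      cases hval

/-- Normalization of the logical fragment. -/
theorem normalization {a : Tm} {A : Ty} (h : Typing [] .L a A) :
    ∃ v, IsValue v ∧ StepStar a v := by
  have hσ : Good [] Tm.var :=
    ⟨fun n => IsValue.var n, fun n θ A hn => by simp at hn⟩
  have hs := fund h Tm.var hσ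
  rw [Tm.subst_var] at hs
  obtain ⟨u, hsu, hu, -⟩ := hs
  exact ⟨u, hu, hsu⟩
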